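/- Fix integers d ≥ 1 and k ≥ 1. Consider systems A, B_1, …, B_k each of dimension d, and systems A', B'_1, …, B'_k with the B'_i mutually isomorphic. Let U^0, …, U^{d−1} be unitaries on A' ⊗ B', and for each i ∈ {1,…,k} let V_{AB_iA'B'_i} = Σ_{m=0}^{d−1} |m⟩⟨m|_A ⊗ I_{B_i} ⊗ U^m_{A'B'_i}, acting as the identity on all remaining systems. For each i, let |φ^i⟩ be a unit vector on A' ⊗ B'_1⋯B'_k ⊗ (B_1⋯B_k with B_i omitted), and define |Ψ⟩ = Σ_{i=1}^k V_{AB_iA'B'_i}(|Φ^d⟩_{AB_i} ⊗ |φ^i⟩). Then ⟨Ψ|Ψ⟩ ≤ k(1 + (k−1)/d). -/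

import Mathlib

open scoped Matrix Kronecker BigOperators ComplexOrder
open Matrix

attribute [local instance] Classical.propDecidable

noncomputable section

/-- A quantum state: a positive semidefinite complex matrix with unit trace. -/
def IsState {n : Type*} [Fintype n] (ρ : Matrix n n ℂ) : Prop :=
  ρ.PosSemidef ∧ ρ.trace = 1

/-- The unitary permuting `k` copies of `B` according to a permutation `π ∈ S_k`. -/
def permMatrix (B : Type*) {k : ℕ} (π : Equiv.Perm (Fin k)) :
    Matrix (Fin k → B) (Fin k → B) ℂ :=
  Matrix.of fun f g => if f = g ∘ π then 1 else 0

/-- Partial trace over all `k` copies of `B` except the copy indexed by `i0`. -/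
def marginalAt {A B : Type*} [Fintype B] {k : ℕ} (i0 : Fin k)
    (ω : Matrix (A × (Fin k → B)) (A × (Fin k → B)) ℂ) : Matrix (A × B) (A × B) ℂ :=
  Matrix.of fun p q =>
    ∑ f : Fin k → B, if f i0 = p.2 then ω (p.1, f) (q.1, Function.update f i0 q.2) else 0

/-- `k`-extendibility of a bipartite state with respect to the partition `A : B`. -/
def IsKExtendible {A B : Type*} [Fintype A] [DecidableEq A] [Fintype B]
    {k : ℕ} (hk : 0 < k) (σ : Matrix (A × B) (A × B) ℂ) : Prop :=
  ∃ ω : Matrix (A × (Fin k → B)) (A × (Fin k → B)) ℂ,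
    IsState ω ∧
    marginalAt ⟨0, hk⟩ ω = σ ∧
    ∀ π : Equiv.Perm (Fin k),
      ((1 : Matrix A A ℂ) ⊗ₖ permMatrix B π) * ω * ((1 : Matrix A A ℂ) ⊗ₖ permMatrix B π)ᴴ = ω

/-- `k`-pure extendibility: the state is the marginal of a permutation-invariant pure state. -/
def IsKPureExtendible {A B : Type*} [Fintype A] [DecidableEq A] [Fintype B]
    {k : ℕ} (hk : 0 < k) (ρ : Matrix (A × B) (A × B) ℂ) : Prop :=
  ∃ ψ : (A × (Fin k → B)) → ℂ,
    (∑ x, Complex.normSq (ψ x)) = 1 ∧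
    (∀ π : Equiv.Perm (Fin k),
      ((1 : Matrix A A ℂ) ⊗ₖ permMatrix B π) * Matrix.vecMulVec ψ (star ψ) *
        ((1 : Matrix A A ℂ) ⊗ₖ permMatrix B π)ᴴ = Matrix.vecMulVec ψ (star ψ)) ∧
    marginalAt ⟨0, hk⟩ (Matrix.vecMulVec ψ (star ψ)) = ρ

/-- The maximally entangled state `(1/|T|) ∑_{i,j} |ii⟩⟨jj|` on `T ⊗ T`. -/
def maxEnt (T : Type*) [Fintype T] [DecidableEq T] : Matrix (T × T) (T × T) ℂ :=
  Matrix.of fun p q => if p.1 = p.2 ∧ q.1 = q.2 then ((Fintype.card T : ℂ))⁻¹ else 0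

/-- The square root of a positive semidefinite matrix, as in the older Mathlib (since removed). -/
def Matrix.PosSemidef.sqrt {n : Type*} [Fintype n] [DecidableEq n] {A : Matrix n n ℂ}
    (hA : A.PosSemidef) : Matrix n n ℂ :=
  (hA.1.eigenvectorUnitary : Matrix n n ℂ) * diagonal ((↑) ∘ Real.sqrt ∘ hA.1.eigenvalues) *
    (star hA.1.eigenvectorUnitary : Matrix n n ℂ)

/-- Square root of a positive semidefinite matrix (junk value `0` off the PSD cone). -/
def psqrt {n : Type*} [Fintype n] [DecidableEq n] (A : Matrix n n ℂ) : Matrix n n ℂ :=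
  if h : A.PosSemidef then h.sqrt else 0

/-- Fidelity of states: `F(ρ,σ) = (Tr √(√σ ρ √σ))²`. -/
def fidelity {n : Type*} [Fintype n] [DecidableEq n] (ρ σ : Matrix n n ℂ) : ℝ :=
  ((psqrt (psqrt σ * ρ * psqrt σ)).trace).re ^ 2

/-- Partial trace over the second tensor factor. -/
def ptraceRight {α β : Type*} [Fintype β] (M : Matrix (α × β) (α × β) ℂ) :
    Matrix α α ℂ :=
  Matrix.of fun a a' => ∑ b, M (a, b) (a', b)

/-- A twisting unitary `V = ∑_i I_A ⊗ |i⟩⟨i|_B ⊗ U^i_{A'B'}` (the shield system `S = A'B'`). -/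
def IsTwistingUnitary {d : ℕ} {S : Type*} [Fintype S]
    (V : Matrix ((Fin d × Fin d) × S) ((Fin d × Fin d) × S) ℂ) : Prop :=
  ∃ U : Fin d → Matrix S S ℂ,
    (∀ i, (U i)ᴴ * U i = 1 ∧ U i * (U i)ᴴ = 1) ∧
    V = Matrix.of fun p q => if p.1 = q.1 then (U p.1.2) p.2 q.2 else 0

/-- The privacy test `Π^γ = V (Φ^d ⊗ I) V†` associated with a twisting unitary `V`. -/
def privacyTest {d : ℕ} {S : Type*} [Fintype S] [DecidableEq S]
    (V : Matrix ((Fin d × Fin d) × S) ((Fin d × Fin d) × S) ℂ) :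
    Matrix ((Fin d × Fin d) × S) ((Fin d × Fin d) × S) ℂ :=
  V * (maxEnt (Fin d) ⊗ₖ (1 : Matrix S S ℂ)) * Vᴴ

/-- A private state of `log₂ d` secret bits: `γ = V (Φ^d ⊗ τ) V†`. -/
def IsPrivateState {d : ℕ} {SA SB : Type*} [Fintype SA] [Fintype SB]
    (γ : Matrix ((Fin d × Fin d) × (SA × SB)) ((Fin d × Fin d) × (SA × SB)) ℂ) : Prop :=
  ∃ (V : Matrix ((Fin d × Fin d) × (SA × SB)) ((Fin d × Fin d) × (SA × SB)) ℂ)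
    (τ : Matrix (SA × SB) (SA × SB) ℂ),
    IsTwistingUnitary V ∧ IsState τ ∧ γ = V * (maxEnt (Fin d) ⊗ₖ τ) * Vᴴ

/-- The ε-hypothesis-testing relative entropy `D^ε_H(ρ‖σ)`. -/
def DH {n : Type*} [Fintype n] [DecidableEq n] (ε : ℝ) (ρ σ : Matrix n n ℂ) : ℝ :=
  -Real.logb 2 (sInf { x : ℝ | ∃ Λ : Matrix n n ℂ, Λ.PosSemidef ∧
      ((1 : Matrix n n ℂ) - Λ).PosSemidef ∧
      1 - ε ≤ ((Λ * ρ).trace).re ∧ x = ((Λ * σ).trace).re })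

/-- The `k`-unextendible hypothesis-testing divergence of a bipartite state. -/
def EHk {A B : Type*} [Fintype A] [DecidableEq A] [Fintype B] [DecidableEq B]
    {k : ℕ} (hk : 0 < k) (ε : ℝ) (ρ : Matrix (A × B) (A × B) ℂ) : ℝ :=
  sInf { x : ℝ | ∃ σ : Matrix (A × B) (A × B) ℂ, IsKExtendible hk σ ∧ x = DH ε ρ σ }

/-- `id_R ⊗ Φ` applied entrywise via the blocks of `M`. -/
def tensorId {R n m : Type*} (Φ : Matrix n n ℂ → Matrix m m ℂ)
    (M : Matrix (R × n) (R × n) ℂ) : Matrix (R × m) (R × m) ℂ :=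
  Matrix.of fun p q => Φ (Matrix.of fun i j => M (p.1, i) (q.1, j)) p.2 q.2

/-- `Φ ⊗ id_R` applied entrywise via the blocks of `M`. -/
def idTensor {R n m : Type*} (Φ : Matrix n n ℂ → Matrix m m ℂ)
    (M : Matrix (n × R) (n × R) ℂ) : Matrix (m × R) (m × R) ℂ :=
  Matrix.of fun p q => Φ (Matrix.of fun i j => M (i, p.2) (j, q.2)) p.1 q.1

/-- Tensor product `E ⊗ F` of two maps on matrices. -/
def prodMap {A B A' B' : Type*} (E : Matrix A A ℂ → Matrix A' A' ℂ)
    (F : Matrix B B ℂ → Matrix B' B' ℂ)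
    (M : Matrix (A × B) (A × B) ℂ) : Matrix (A' × B') (A' × B') ℂ :=
  idTensor E (tensorId F M)

/-- Linearity of a map on matrices. -/
def IsLinearMat {n m : Type*} (Φ : Matrix n n ℂ → Matrix m m ℂ) : Prop :=
  ∀ (c : ℂ) (M N : Matrix n n ℂ), Φ (c • M + N) = c • Φ M + Φ N

/-- Complete positivity of a linear map on matrices. -/
def IsCPMap {n m : Type*} [Fintype n] [Fintype m] (Φ : Matrix n n ℂ → Matrix m m ℂ) : Prop :=
  IsLinearMat Φ ∧ ∀ (r : ℕ) (M : Matrix (Fin r × n) (Fin r × n) ℂ),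
    M.PosSemidef → (tensorId Φ M).PosSemidef

/-- A quantum channel: a completely positive trace-preserving linear map. -/
def IsChannel {n m : Type*} [Fintype n] [Fintype m] (Φ : Matrix n n ℂ → Matrix m m ℂ) : Prop :=
  IsCPMap Φ ∧ ∀ M : Matrix n n ℂ, (Φ M).trace = M.trace

/-- A one-way LOCC channel `∑_x E^x ⊗ F^x` from `A ⊗ B` to `A' ⊗ B'`. -/
def IsOneWayLOCC {A B A' B' : Type*} [Fintype A] [Fintype B] [Fintype A'] [Fintype B']
    (L : Matrix (A × B) (A × B) ℂ → Matrix (A' × B') (A' × B') ℂ) : Prop :=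
  ∃ (m : ℕ) (E : Fin m → (Matrix A A ℂ → Matrix A' A' ℂ))
    (F : Fin m → (Matrix B B ℂ → Matrix B' B' ℂ)),
    (∀ x, IsCPMap (E x)) ∧
    (∀ M : Matrix A A ℂ, (∑ x, E x M).trace = M.trace) ∧
    (∀ x, IsChannel (F x)) ∧
    ∀ M, L M = ∑ x, prodMap (E x) (F x) M

/-- The Choi state of a channel `N : A → B`. -/
def choiState {A B : Type*} [Fintype A] [DecidableEq A]
    (N : Matrix A A ℂ → Matrix B B ℂ) : Matrix (A × B) (A × B) ℂ :=
  tensorId N (maxEnt A)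

/-- Hypothesis-testing divergence of channels: sup over reference systems and input states. -/
def chDivH {A B : Type*} [Fintype A] [Fintype B] [DecidableEq B] (ε : ℝ)
    (N M : Matrix A A ℂ → Matrix B B ℂ) : ℝ :=
  sSup { x : ℝ | ∃ (r : ℕ) (ρ : Matrix (Fin r × A) (Fin r × A) ℂ),
    IsState ρ ∧ x = DH ε (tensorId N ρ) (tensorId M ρ) }

/-- The `k`-unextendible hypothesis-testing divergence of a channel. -/
def EHkCh {A B : Type*} [Fintype A] [DecidableEq A] [Fintype B] [DecidableEq B]
    {k : ℕ} (hk : 0 < k) (ε : ℝ) (N : Matrix A A ℂ → Matrix B B ℂ) : ℝ :=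
  sInf { x : ℝ | ∃ M : Matrix A A ℂ → Matrix B B ℂ,
    IsChannel M ∧ IsKExtendible hk (choiState M) ∧ x = chDivH ε N M }

/-- Real power of a Hermitian matrix by functional calculus on its support
(zero eigenvalues are sent to zero; junk value `0` for non-Hermitian input). -/
def mpow {n : Type*} [Fintype n] [DecidableEq n] (A : Matrix n n ℂ) (r : ℝ) :
    Matrix n n ℂ :=
  if hA : A.IsHermitian then
    (hA.eigenvectorUnitary : Matrix n n ℂ) *
      Matrix.diagonal (fun i =>
        if hA.eigenvalues i = 0 then (0 : ℂ) else ((hA.eigenvalues i ^ r : ℝ) : ℂ)) *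
      (star hA.eigenvectorUnitary : Matrix n n ℂ)
  else 0

/-- The sandwiched Rényi relative entropy `D̃_α(ρ‖σ)`. -/
def sandwichedRenyi {n : Type*} [Fintype n] [DecidableEq n] (α : ℝ)
    (ρ σ : Matrix n n ℂ) : ℝ :=
  (α - 1)⁻¹ * Real.logb 2
    ((mpow (mpow σ ((1 - α) / (2 * α)) * ρ * mpow σ ((1 - α) / (2 * α))) α).trace).re

/-- The `k`-unextendible sandwiched Rényi divergence of a bipartite state. -/
def sandEk {A B : Type*} [Fintype A] [DecidableEq A] [Fintype B] [DecidableEq B]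
    {k : ℕ} (hk : 0 < k) (α : ℝ) (ρ : Matrix (A × B) (A × B) ℂ) : ℝ :=
  sInf { x : ℝ | ∃ σ : Matrix (A × B) (A × B) ℂ,
    IsKExtendible hk σ ∧ x = sandwichedRenyi α ρ σ }

/-- Sandwiched Rényi divergence of channels. -/
def sandDivCh {A B : Type*} [Fintype A] [Fintype B] [DecidableEq B] (α : ℝ)
    (N M : Matrix A A ℂ → Matrix B B ℂ) : ℝ :=
  sSup { x : ℝ | ∃ (r : ℕ) (ρ : Matrix (Fin r × A) (Fin r × A) ℂ),
    IsState ρ ∧ x = sandwichedRenyi α (tensorId N ρ) (tensorId M ρ) }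

/-- The `k`-unextendible sandwiched Rényi divergence of a channel. -/
def sandEkCh {A B : Type*} [Fintype A] [DecidableEq A] [Fintype B] [DecidableEq B]
    {k : ℕ} (hk : 0 < k) (α : ℝ) (N : Matrix A A ℂ → Matrix B B ℂ) : ℝ :=
  sInf { x : ℝ | ∃ M : Matrix A A ℂ → Matrix B B ℂ,
    IsChannel M ∧ IsKExtendible hk (choiState M) ∧ x = sandDivCh α N M }

/-- The geometric Rényi relative entropy `D̂_α(ρ‖σ)` (`⊤` if `supp ρ ⊄ supp σ`). -/
def geomRenyi {n : Type*} [Fintype n] [DecidableEq n] (α : ℝ)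
    (ρ σ : Matrix n n ℂ) : EReal :=
  if ∀ v : n → ℂ, σ.mulVec v = 0 → ρ.mulVec v = 0 then
    (((α - 1)⁻¹ * Real.logb 2
      ((σ * mpow (mpow σ (-(1 / 2)) * ρ * mpow σ (-(1 / 2))) α).trace).re : ℝ) : EReal)
  else ⊤

/-- Geometric Rényi divergence of channels. -/
def geomDivCh {A B : Type*} [Fintype A] [Fintype B] [DecidableEq B] (α : ℝ)
    (N M : Matrix A A ℂ → Matrix B B ℂ) : EReal :=
  sSup { x : EReal | ∃ (r : ℕ) (ρ : Matrix (Fin r × A) (Fin r × A) ℂ),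
    IsState ρ ∧ x = geomRenyi α (tensorId N ρ) (tensorId M ρ) }

/-- The `k`-unextendible geometric Rényi divergence of a channel. -/
def geomEkCh {A B : Type*} [Fintype A] [DecidableEq A] [Fintype B] [DecidableEq B]
    {k : ℕ} (hk : 0 < k) (α : ℝ) (N : Matrix A A ℂ → Matrix B B ℂ) : EReal :=
  sInf { x : EReal | ∃ M : Matrix A A ℂ → Matrix B B ℂ,
    IsChannel M ∧ IsKExtendible hk (choiState M) ∧ x = geomDivCh α N M }

/-- The `n`-fold tensor power `ρ^{⊗n}` of a bipartite state, with the partition `A^n : B^n`. -/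
def statePow {A B : Type*} (ρ : Matrix (A × B) (A × B) ℂ) (n : ℕ) :
    Matrix ((Fin n → A) × (Fin n → B)) ((Fin n → A) × (Fin n → B)) ℂ :=
  Matrix.of fun p q => ∏ i, ρ (p.1 i, p.2 i) (q.1 i, q.2 i)

/-- The `n`-fold tensor power `N^{⊗n}` of a channel. -/
def chTensorPow {A B : Type*} [Fintype A] [DecidableEq A]
    (N : Matrix A A ℂ → Matrix B B ℂ) (n : ℕ)
    (M : Matrix (Fin n → A) (Fin n → A) ℂ) : Matrix (Fin n → B) (Fin n → B) ℂ :=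
  Matrix.of fun f g => ∑ p : Fin n → A, ∑ q : Fin n → A,
    M p q * ∏ i, N (Matrix.single (p i) (q i) 1) (f i) (g i)

/-- The `d`-dimensional erasure channel with erasure probability `p`. -/
def erasureCh (d : ℕ) (p : ℝ) (ρ : Matrix (Fin d) (Fin d) ℂ) :
    Matrix (Fin (d + 1)) (Fin (d + 1)) ℂ :=
  Matrix.of fun i j =>
    if hi : (i : ℕ) < d then
      (if hj : (j : ℕ) < d then ((1 - p : ℝ) : ℂ) * ρ ⟨i, hi⟩ ⟨j, hj⟩ else 0)
    else (if (j : ℕ) < d then 0 else (p : ℂ) * ρ.trace)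

/-- `n`-fold product of the Bernoulli distribution `(x, y)` (`false ↦ x`, `true ↦ y`). -/
def bernProd (x y : ℝ) (n : ℕ) : (Fin n → Bool) → ℝ :=
  fun f => ∏ i, if f i then y else x

/-- The classical ε-hypothesis-testing relative entropy. -/
def DHclassical {X : Type*} [Fintype X] (ε : ℝ) (P Q : X → ℝ) : ℝ :=
  -Real.logb 2 (sInf { x : ℝ | ∃ t : X → ℝ,
    (∀ i, 0 ≤ t i ∧ t i ≤ 1) ∧ 1 - ε ≤ ∑ i, t i * P i ∧ x = ∑ i, t i * Q i })

/-- Reordering `(X × K) × B ≃ K × (B × X)` used in forward-assisted protocols. -/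
def protoReorder (X K B : Type*) : ((X × K) × B) ≃ (K × (B × X)) where
  toFun p := (p.1.2, (p.2, p.1.1))
  invFun q := ((q.2.2, q.1), q.2.1)
  left_inv _ := rfl
  right_inv _ := rfl

/-- The output of a one-shot forward-assisted secret-key protocol: the cq input state
`∑_x p_x |x⟩⟨x|_X ⊗ ρ^x_{A'A''A}` is sent through `id ⊗ N` and decoded by `D_{BX→B'B''}`. -/
def protocolOutput {A B : Type*} {m d : ℕ} {SA SB : Type*}
    (N : Matrix A A ℂ → Matrix B B ℂ)
    (pr : Fin m → ℝ)
    (ρx : Fin m → Matrix ((Fin d × SA) × A) ((Fin d × SA) × A) ℂ)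
    (D : Matrix (B × Fin m) (B × Fin m) ℂ → Matrix (Fin d × SB) (Fin d × SB) ℂ) :
    Matrix ((Fin d × SA) × (Fin d × SB)) ((Fin d × SA) × (Fin d × SB)) ℂ :=
  tensorId D (Matrix.reindex (protoReorder (Fin m) (Fin d × SA) B)
    (protoReorder (Fin m) (Fin d × SA) B)
    (tensorId N (Matrix.of fun (p q : (Fin m × (Fin d × SA)) × A) =>
      if p.1.1 = q.1.1 then (pr p.1.1 : ℂ) * ρx p.1.1 (p.1.2, p.2) (q.1.2, q.2) else 0)))

/-- The Choi state of the `d`-dimensional erasure channel with erasure probability `1 - 1/k`: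
`(1/k) Φ^d + (1 - 1/k)(I/d) ⊗ |e⟩⟨e|`. -/
def erasureChoi (d k : ℕ) : Matrix (Fin d × Fin (d + 1)) (Fin d × Fin (d + 1)) ℂ :=
  Matrix.of fun p q =>
    (k : ℂ)⁻¹ * ((d : ℂ)⁻¹ *
      (if p.2 = Fin.castSucc p.1 ∧ q.2 = Fin.castSucc q.1 then 1 else 0)) +
    (1 - (k : ℂ)⁻¹) * ((d : ℂ)⁻¹ *
      (if p.1 = q.1 ∧ p.2 = Fin.last d ∧ q.2 = Fin.last d then 1 else 0))

/-- The explicit `k`-extension `(1/k) ∑_i Φ^d_{AB_i} ⊗ (⊗_{j≠i} |e⟩⟨e|_{B_j})`. -/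
def erasureExt (d k : ℕ) :
    Matrix (Fin d × (Fin k → Fin (d + 1))) (Fin d × (Fin k → Fin (d + 1))) ℂ :=
  Matrix.of fun p q => (k : ℂ)⁻¹ * ∑ i : Fin k,
    ((if p.2 i = Fin.castSucc p.1 ∧ q.2 i = Fin.castSucc q.1 then (d : ℂ)⁻¹ else 0) *
      ∏ j ∈ Finset.univ.erase i,
        (if p.2 j = Fin.last d ∧ q.2 j = Fin.last d then 1 else 0))

end


private lemma cs_aux {ι : Type*} [Fintype ι] (u v : ι → ℂ) :
    ‖∑ x, (starRingEnd ℂ) (u x) * v x‖ ≤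
      Real.sqrt (∑ x, Complex.normSq (u x)) * Real.sqrt (∑ x, Complex.normSq (v x)) := by
  have h1 : ‖∑ x, (starRingEnd ℂ) (u x) * v x‖ ≤
      ∑ x, ‖u x‖ * ‖v x‖ := by
    refine le_trans (norm_sum_le _ _) ?_
    apply Finset.sum_le_sum
    intro x _
    rw [norm_mul, Complex.norm_conj]
  refine h1.trans ?_
  have h2 := Finset.sum_mul_sq_le_sq_mul_sq Finset.univ
    (fun x => ‖u x‖) (fun x => ‖v x‖)
  have h3 : (∑ x, ‖u x‖ * ‖v x‖) ^ 2 ≤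
      (∑ x, Complex.normSq (u x)) * (∑ x, Complex.normSq (v x)) := by
    simpa [Complex.sq_norm] using h2
  have h4 : (0:ℝ) ≤ ∑ x, ‖u x‖ * ‖v x‖ :=
    Finset.sum_nonneg fun x _ => mul_nonneg (norm_nonneg _) (norm_nonneg _)
  have := Real.sqrt_le_sqrt h3
  rwa [Real.sqrt_sq h4, Real.sqrt_mul (Finset.sum_nonneg fun x _ => Complex.normSq_nonneg _)] at this

private lemma star_dot_self {n : Type*} [Fintype n] (w : n → ℂ) :
    star w ⬝ᵥ w = ((∑ x, Complex.normSq (w x) : ℝ) : ℂ) := by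
  simp only [dotProduct, Pi.star_apply, Complex.ofReal_sum]
  exact Finset.sum_congr rfl fun x _ => (Complex.normSq_eq_conj_mul_self).symm ▸ rfl

private lemma unitary_sum_normSq {n : Type*} [Fintype n] [DecidableEq n]
    (M : Matrix n n ℂ) (hM : Mᴴ * M = 1) (v : n → ℂ) :
    ∑ x, Complex.normSq ((M *ᵥ v) x) = ∑ x, Complex.normSq (v x) := by
  have h2 : star (M *ᵥ v) ⬝ᵥ (M *ᵥ v) = star v ⬝ᵥ v := by
    rw [Matrix.star_mulVec, Matrix.dotProduct_mulVec, Matrix.vecMul_vecMul, hM,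
      Matrix.vecMul_one]
  have := (star_dot_self (M *ᵥ v)).symm.trans (h2.trans (star_dot_self v))
  exact_mod_cast this

private lemma key1 {k : ℕ} {A' B' : Type*} [Fintype A'] [DecidableEq A'] [Fintype B']
    [DecidableEq B']
    (M : Matrix (A' × B') (A' × B') ℂ) (hM : Mᴴ * M = 1) (i : Fin k)
    (ψ : A' × (Fin k → B') → ℂ) :
    ∑ c0 : A', ∑ g : Fin k → B',
      Complex.normSq (∑ c : A', ∑ y : B', M (c0, g i) (c, y) * ψ (c, Function.update g i y))
      = ∑ c : A', ∑ h : Fin k → B', Complex.normSq (ψ (c, h)) := by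
  classical
  set e := Equiv.piSplitAt i (fun _ : Fin k => B') with he
  have hei : ∀ p : B' × ({j : Fin k // j ≠ i} → B'), (e.symm p) i = p.1 := by
    intro p; simp [he, Equiv.piSplitAt_symm_apply]
  have hupd : ∀ (p : B' × ({j : Fin k // j ≠ i} → B')) (y : B'),
      Function.update (e.symm p) i y = e.symm (y, p.2) := by
    intro p y
    funext j
    by_cases hj : j = i
    · subst hj; simp [he, Equiv.piSplitAt_symm_apply]
    · simp [he, Equiv.piSplitAt_symm_apply, hj, Function.update_of_ne hj]
  have lhs_eq : ∀ c0 : A', ∑ g : Fin k → B',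
      Complex.normSq (∑ c : A', ∑ y : B', M (c0, g i) (c, y) * ψ (c, Function.update g i y))
      = ∑ p : B' × ({j : Fin k // j ≠ i} → B'),
      Complex.normSq (∑ c : A', ∑ y : B', M (c0, p.1) (c, y) * ψ (c, e.symm (y, p.2))) := by
    intro c0
    rw [← Equiv.sum_comp e.symm (fun g =>
      Complex.normSq (∑ c : A', ∑ y : B', M (c0, g i) (c, y) * ψ (c, Function.update g i y)))]
    refine Finset.sum_congr rfl fun p _ => ?_
    rw [hei]
    congr 1
    refine Finset.sum_congr rfl fun c _ => Finset.sum_congr rfl fun y _ => ?_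
    rw [hupd]
  calc ∑ c0 : A', ∑ g : Fin k → B',
      Complex.normSq (∑ c : A', ∑ y : B', M (c0, g i) (c, y) * ψ (c, Function.update g i y))
      = ∑ c0 : A', ∑ p : B' × ({j : Fin k // j ≠ i} → B'),
        Complex.normSq (∑ c : A', ∑ y : B', M (c0, p.1) (c, y) * ψ (c, e.symm (y, p.2))) :=
        Finset.sum_congr rfl fun c0 _ => lhs_eq c0
    _ = ∑ p : B' × ({j : Fin k // j ≠ i} → B'), ∑ c0 : A',
        Complex.normSq (∑ c : A', ∑ y : B', M (c0, p.1) (c, y) * ψ (c, e.symm (y, p.2))) :=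
        Finset.sum_comm
    _ = ∑ b : B', ∑ r : {j : Fin k // j ≠ i} → B', ∑ c0 : A',
        Complex.normSq (∑ c : A', ∑ y : B', M (c0, b) (c, y) * ψ (c, e.symm (y, r))) := by
        rw [Fintype.sum_prod_type]
    _ = ∑ r : {j : Fin k // j ≠ i} → B', ∑ b : B', ∑ c0 : A',
        Complex.normSq (∑ c : A', ∑ y : B', M (c0, b) (c, y) * ψ (c, e.symm (y, r))) :=
        Finset.sum_comm
    _ = ∑ r : {j : Fin k // j ≠ i} → B', ∑ s : A' × B',
        Complex.normSq ((M *ᵥ (fun t : A' × B' => ψ (t.1, e.symm (t.2, r)))) s) := by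
        refine Finset.sum_congr rfl fun r _ => ?_
        rw [Fintype.sum_prod_type]
        rw [Finset.sum_comm]
        refine Finset.sum_congr rfl fun c0 _ => Finset.sum_congr rfl fun b _ => ?_
        congr 1
        simp only [Matrix.mulVec, dotProduct, Fintype.sum_prod_type]
    _ = ∑ r : {j : Fin k // j ≠ i} → B', ∑ s : A' × B',
        Complex.normSq (ψ (s.1, e.symm (s.2, r))) :=
        Finset.sum_congr rfl fun r _ => unitary_sum_normSq M hM _
    _ = ∑ r : {j : Fin k // j ≠ i} → B', ∑ c : A', ∑ y : B',
        Complex.normSq (ψ (c, e.symm (y, r))) := by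
        refine Finset.sum_congr rfl fun r _ => ?_
        rw [Fintype.sum_prod_type]
    _ = ∑ c : A', ∑ r : {j : Fin k // j ≠ i} → B', ∑ y : B',
        Complex.normSq (ψ (c, e.symm (y, r))) := Finset.sum_comm
    _ = ∑ c : A', ∑ h : Fin k → B', Complex.normSq (ψ (c, h)) := by
        refine Finset.sum_congr rfl fun c _ => ?_
        rw [Finset.sum_comm, ← Equiv.sum_comp e.symm (fun h => Complex.normSq (ψ (c, h))),
          Fintype.sum_prod_type]

private lemma sum_ind {d k : ℕ} (hd : 0 < d) (i j : Fin k)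
    (Φ : ({j' : Fin k // j' ≠ i} → Fin d) → ℝ) (hΦ : ∑ r, Φ r = 1) :
    ∑ a : Fin d, ∑ f : Fin k → Fin d,
      (if f j = a then (1:ℝ) else 0) *
        ((if f i = a then (d:ℝ)⁻¹ else 0) * Φ (fun j' => f j'.1))
      = if i = j then 1 else (d:ℝ)⁻¹ := by
  classical
  have hd' : (d:ℝ) ≠ 0 := Nat.cast_ne_zero.mpr hd.ne'
  set ef := Equiv.piSplitAt i (fun _ : Fin k => Fin d) with hef
  have hfi : ∀ p : Fin d × ({j' : Fin k // j' ≠ i} → Fin d), (ef.symm p) i = p.1 := by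
    intro p; simp [hef, Equiv.piSplitAt_symm_apply]
  have hfr : ∀ p : Fin d × ({j' : Fin k // j' ≠ i} → Fin d),
      (fun j' : {j' : Fin k // j' ≠ i} => (ef.symm p) j'.1) = p.2 := by
    intro p; funext j'
    simp [hef, Equiv.piSplitAt_symm_apply, j'.2]
  have step : ∀ a : Fin d,
      ∑ f : Fin k → Fin d, (if f j = a then (1:ℝ) else 0) *
        ((if f i = a then (d:ℝ)⁻¹ else 0) * Φ (fun j' => f j'.1))
      = ∑ p : Fin d × ({j' : Fin k // j' ≠ i} → Fin d),
        (if (ef.symm p) j = a then (1:ℝ) else 0) *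
          ((if p.1 = a then (d:ℝ)⁻¹ else 0) * Φ p.2) := by
    intro a
    rw [← Equiv.sum_comp ef.symm (fun f => (if f j = a then (1:ℝ) else 0) *
        ((if f i = a then (d:ℝ)⁻¹ else 0) * Φ (fun j' => f j'.1)))]
    exact Finset.sum_congr rfl fun p _ => by rw [hfi, hfr]
  rw [Finset.sum_congr rfl fun a _ => step a]
  by_cases hij : i = j
  · subst hij
    rw [if_pos rfl]
    simp only [hfi, Fintype.sum_prod_type]
    simp [ite_mul, mul_ite, Finset.sum_ite_eq, Finset.sum_ite_eq', ← Finset.mul_sum, hΦ,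
      Finset.mul_sum]
    simp only [← mul_assoc, mul_inv_cancel₀ hd', one_mul, hΦ]
  · rw [if_neg hij]
    have hji : j ≠ i := fun h => hij h.symm
    have hfj : ∀ p : Fin d × ({j' : Fin k // j' ≠ i} → Fin d),
        (ef.symm p) j = p.2 ⟨j, hji⟩ := by
      intro p; simp [hef, Equiv.piSplitAt_symm_apply, hji]
    simp only [hfj, Fintype.sum_prod_type]
    simp [ite_mul, mul_ite, Finset.sum_ite_eq, Finset.sum_ite_eq', ← Finset.mul_sum, hΦ,
      Finset.mul_sum]
    rw [Finset.sum_comm]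
    simp [Finset.sum_ite_eq, ← Finset.mul_sum, hΦ]

/-- The norm of `|Ψ⟩ = ∑_i V_{AB_iA'B'_i}(|Φ^d⟩_{AB_i} ⊗ |φ^i⟩)` is at most
`k(1 + (k-1)/d)`. -/
theorem norm_sum_twisted_maxEnt_le
    {d k : ℕ} (hd : 1 ≤ d) (hk : 1 ≤ k)
    {A' B' : Type*} [Fintype A'] [DecidableEq A'] [Fintype B'] [DecidableEq B']
    (U : Fin d → Matrix (A' × B') (A' × B') ℂ)
    (hU : ∀ m, (U m)ᴴ * U m = 1 ∧ U m * (U m)ᴴ = 1)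
    (φ : (i : Fin k) → (A' × (Fin k → B') × ({j : Fin k // j ≠ i} → Fin d)) → ℂ)
    (hφ : ∀ i, ∑ z, Complex.normSq (φ i z) = 1) :
    ∑ x : Fin d × (Fin k → Fin d) × A' × (Fin k → B'),
      Complex.normSq (∑ i : Fin k, ∑ c : A', ∑ y : B',
        (U x.1) (x.2.2.1, x.2.2.2 i) (c, y) *
          ((if x.2.1 i = x.1 then (((Real.sqrt d)⁻¹ : ℝ) : ℂ) else 0) *
            φ i (c, Function.update x.2.2.2 i y, fun j => x.2.1 j.1)))
      ≤ (k : ℝ) * (1 + ((k : ℝ) - 1) / (d : ℝ)) := by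
  classical
  have hd0 : 0 < d := hd
  have hdR : (0:ℝ) < d := by exact_mod_cast hd
  have hdne : (d:ℝ) ≠ 0 := hdR.ne'
  set Ψ : Fin k → (Fin d × (Fin k → Fin d) × A' × (Fin k → B')) → ℂ := fun i x =>
    ∑ c : A', ∑ y : B', (U x.1) (x.2.2.1, x.2.2.2 i) (c, y) *
      ((if x.2.1 i = x.1 then (((Real.sqrt d)⁻¹ : ℝ) : ℂ) else 0) *
        φ i (c, Function.update x.2.2.2 i y, fun j => x.2.1 j.1)) with hΨdef
  set F : Fin k → (Fin d × (Fin k → Fin d) × A' × (Fin k → B')) → ℂ := fun i x =>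
    ∑ c : A', ∑ y : B', (U x.1) (x.2.2.1, x.2.2.2 i) (c, y) *
      φ i (c, Function.update x.2.2.2 i y, fun j => x.2.1 j.1) with hFdef
  have hfact : ∀ i x, Ψ i x =
      (if x.2.1 i = x.1 then (((Real.sqrt d)⁻¹ : ℝ) : ℂ) else 0) * F i x := by
    intro i x
    rw [hΨdef, hFdef, Finset.mul_sum]
    refine Finset.sum_congr rfl fun c _ => ?_
    rw [Finset.mul_sum]
    exact Finset.sum_congr rfl fun y _ => by ring
  have hzero : ∀ i x, ¬ (x.2.1 i = x.1) → Ψ i x = 0 := by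
    intro i x h; rw [hfact, if_neg h, zero_mul]
  have hnormΨ : ∀ i x, Complex.normSq (Ψ i x) =
      (if x.2.1 i = x.1 then (d:ℝ)⁻¹ else 0) * Complex.normSq (F i x) := by
    intro i x
    rw [hfact]
    by_cases h : x.2.1 i = x.1
    · rw [if_pos h, if_pos h, Complex.normSq_mul, Complex.normSq_ofReal]
      congr 1
      rw [← mul_inv, Real.mul_self_sqrt hdR.le]
    · simp [h]
  -- the restricted norms
  have hS : ∀ i j : Fin k,
      ∑ x : Fin d × (Fin k → Fin d) × A' × (Fin k → B'),
        (if x.2.1 j = x.1 then (1:ℝ) else 0) * Complex.normSq (Ψ i x)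
      = if i = j then 1 else (d:ℝ)⁻¹ := by
    intro i j
    have hΦ1 : ∑ r : {j' : Fin k // j' ≠ i} → Fin d,
        (∑ c : A', ∑ h : Fin k → B', Complex.normSq (φ i (c, h, r))) = 1 := by
      have h0 := hφ i
      simp only [Fintype.sum_prod_type] at h0
      rw [Finset.sum_comm, ← h0]
      exact Finset.sum_congr rfl fun c _ => Finset.sum_comm
    calc ∑ x : Fin d × (Fin k → Fin d) × A' × (Fin k → B'),
        (if x.2.1 j = x.1 then (1:ℝ) else 0) * Complex.normSq (Ψ i x)
        = ∑ a : Fin d, ∑ f : Fin k → Fin d, ∑ c0 : A', ∑ g : Fin k → B',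
          (if f j = a then (1:ℝ) else 0) * ((if f i = a then (d:ℝ)⁻¹ else 0) *
            Complex.normSq (F i (a, f, c0, g))) := by
          simp only [Fintype.sum_prod_type]
          refine Finset.sum_congr rfl fun a _ => Finset.sum_congr rfl fun f _ =>
            Finset.sum_congr rfl fun c0 _ => Finset.sum_congr rfl fun g _ => ?_
          rw [hnormΨ]
      _ = ∑ a : Fin d, ∑ f : Fin k → Fin d,
          (if f j = a then (1:ℝ) else 0) * ((if f i = a then (d:ℝ)⁻¹ else 0) *
            (∑ c0 : A', ∑ g : Fin k → B', Complex.normSq (F i (a, f, c0, g)))) := by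
          refine Finset.sum_congr rfl fun a _ => Finset.sum_congr rfl fun f _ => ?_
          simp only [← Finset.mul_sum]
      _ = ∑ a : Fin d, ∑ f : Fin k → Fin d,
          (if f j = a then (1:ℝ) else 0) * ((if f i = a then (d:ℝ)⁻¹ else 0) *
            (∑ c : A', ∑ h : Fin k → B',
              Complex.normSq (φ i (c, h, fun j' => f j'.1)))) := by
          refine Finset.sum_congr rfl fun a _ => Finset.sum_congr rfl fun f _ => ?_
          congr 2
          exact key1 (U a) (hU a).1 i (fun s => φ i (s.1, s.2, fun j' => f j'.1))
      _ = if i = j then 1 else (d:ℝ)⁻¹ :=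
          sum_ind hd0 i j (fun r => ∑ c : A', ∑ h : Fin k → B',
            Complex.normSq (φ i (c, h, r))) hΦ1
  have hdiag : ∀ i, ∑ x, Complex.normSq (Ψ i x) = 1 := by
    intro i
    have h := hS i i
    rw [if_pos rfl] at h
    rw [← h]
    refine Finset.sum_congr rfl fun x _ => ?_
    by_cases hx : x.2.1 i = x.1
    · rw [if_pos hx, one_mul]
    · rw [if_neg hx, zero_mul, hzero i x hx]; simp
  have hGcross : ∀ i j, i ≠ j →
      ‖∑ x, (starRingEnd ℂ) (Ψ i x) * Ψ j x‖ ≤ (d:ℝ)⁻¹ := by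
    intro i j hij
    set u : (Fin d × (Fin k → Fin d) × A' × (Fin k → B')) → ℂ := fun x =>
      (if x.2.1 j = x.1 then (1:ℂ) else 0) * Ψ i x with hu
    set v : (Fin d × (Fin k → Fin d) × A' × (Fin k → B')) → ℂ := fun x =>
      (if x.2.1 i = x.1 then (1:ℂ) else 0) * Ψ j x with hv
    have hpt : ∀ x, (starRingEnd ℂ) (Ψ i x) * Ψ j x = (starRingEnd ℂ) (u x) * v x := by
      intro x
      by_cases h1 : x.2.1 j = x.1
      · by_cases h2 : x.2.1 i = x.1
        · simp [hu, hv, h1, h2]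
        · simp [hu, hv, h1, h2, hzero i x h2]
      · simp [hu, hv, h1, hzero j x h1]
    have hnu : ∑ x, Complex.normSq (u x) = (d:ℝ)⁻¹ := by
      have h := hS i j
      rw [if_neg hij] at h
      rw [← h]
      refine Finset.sum_congr rfl fun x _ => ?_
      by_cases hx : x.2.1 j = x.1 <;> simp [hu, hx]
    have hnv : ∑ x, Complex.normSq (v x) = (d:ℝ)⁻¹ := by
      have h := hS j i
      rw [if_neg (fun hh => hij hh.symm)] at h
      rw [← h]
      refine Finset.sum_congr rfl fun x _ => ?_
      by_cases hx : x.2.1 i = x.1 <;> simp [hv, hx]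
    calc ‖∑ x, (starRingEnd ℂ) (Ψ i x) * Ψ j x‖
        = ‖∑ x, (starRingEnd ℂ) (u x) * v x‖ := by
          rw [Finset.sum_congr rfl fun x _ => hpt x]
      _ ≤ Real.sqrt (∑ x, Complex.normSq (u x)) * Real.sqrt (∑ x, Complex.normSq (v x)) :=
          cs_aux u v
      _ = (d:ℝ)⁻¹ := by
          rw [hnu, hnv, Real.mul_self_sqrt (inv_nonneg.2 hdR.le)]
  have hdre : ∀ i, (∑ x, (starRingEnd ℂ) (Ψ i x) * Ψ i x).re = 1 := by
    intro i
    rw [Complex.re_sum]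
    rw [show ∑ x, ((starRingEnd ℂ) (Ψ i x) * Ψ i x).re = ∑ x, Complex.normSq (Ψ i x) from
      Finset.sum_congr rfl fun x _ => by
        rw [← Complex.normSq_eq_conj_mul_self, Complex.ofReal_re]]
    exact hdiag i
  have hexp : ∑ x, Complex.normSq (∑ i, Ψ i x)
      = ∑ i : Fin k, ∑ j : Fin k, (∑ x, (starRingEnd ℂ) (Ψ i x) * Ψ j x).re := by
    have hx : ∀ x, Complex.normSq (∑ i, Ψ i x)
        = ∑ i, ∑ j, ((starRingEnd ℂ) (Ψ i x) * Ψ j x).re := by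
      intro x
      have h1 : ((Complex.normSq (∑ i, Ψ i x) : ℝ) : ℂ)
          = ∑ i, ∑ j, (starRingEnd ℂ) (Ψ i x) * Ψ j x := by
        rw [Complex.normSq_eq_conj_mul_self, map_sum, Finset.sum_mul_sum]
      have h2 := congrArg Complex.re h1
      rw [Complex.ofReal_re] at h2
      rw [h2, Complex.re_sum]
      exact Finset.sum_congr rfl fun i _ => Complex.re_sum _ _
    calc ∑ x, Complex.normSq (∑ i, Ψ i x)
        = ∑ x, ∑ i, ∑ j, ((starRingEnd ℂ) (Ψ i x) * Ψ j x).re :=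
          Finset.sum_congr rfl fun x _ => hx x
      _ = ∑ i, ∑ x, ∑ j, ((starRingEnd ℂ) (Ψ i x) * Ψ j x).re := Finset.sum_comm
      _ = ∑ i, ∑ j, ∑ x, ((starRingEnd ℂ) (Ψ i x) * Ψ j x).re :=
          Finset.sum_congr rfl fun i _ => Finset.sum_comm
      _ = ∑ i : Fin k, ∑ j : Fin k, (∑ x, (starRingEnd ℂ) (Ψ i x) * Ψ j x).re :=
          Finset.sum_congr rfl fun i _ => Finset.sum_congr rfl fun j _ =>
            (Complex.re_sum _ _).symm
  have hmain : ∑ x, Complex.normSq (∑ i, Ψ i x) ≤ (k:ℝ) * (1 + ((k:ℝ) - 1) / (d:ℝ)) := by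
    rw [hexp]
    calc ∑ i : Fin k, ∑ j : Fin k, (∑ x, (starRingEnd ℂ) (Ψ i x) * Ψ j x).re
        ≤ ∑ i : Fin k, ∑ j : Fin k, (if i = j then (1:ℝ) else (d:ℝ)⁻¹) := by
          refine Finset.sum_le_sum fun i _ => Finset.sum_le_sum fun j _ => ?_
          by_cases hij : i = j
          · subst hij; rw [if_pos rfl, hdre i]
          · rw [if_neg hij]
            exact (Complex.re_le_norm _).trans (hGcross i j hij)
      _ = (k:ℝ) * (1 + ((k:ℝ) - 1) / (d:ℝ)) := by
          have hrow : ∀ i : Fin k, ∑ j : Fin k, (if i = j then (1:ℝ) else (d:ℝ)⁻¹)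
              = 1 + ((k:ℝ) - 1) * (d:ℝ)⁻¹ := by
            intro i
            have : ∀ j : Fin k, (if i = j then (1:ℝ) else (d:ℝ)⁻¹)
                = (d:ℝ)⁻¹ + (if i = j then 1 - (d:ℝ)⁻¹ else 0) := by
              intro j; by_cases h : i = j <;> simp [h]
            rw [Finset.sum_congr rfl fun j _ => this j, Finset.sum_add_distrib,
              Finset.sum_const, Finset.sum_ite_eq, if_pos (Finset.mem_univ i),
              Finset.card_univ, Fintype.card_fin, nsmul_eq_mul]
            ring
          rw [Finset.sum_congr rfl fun i _ => hrow i, Finset.sum_const,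
            Finset.card_univ, Fintype.card_fin, nsmul_eq_mul]
          field_simp
  exact hmain
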